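/- For L = {a, ab, aab} over the alphabet {a,b}, the set SU(L) of words in L* all of whose factorizations into elements of L have the same number of factors equals the regular language (ab)* a*. -/

import Mathlib

open Computability

/-- `l` is a factorization of `x` into elements of `L`. -/
def IsFactorization {α : Type*} (L : Language α) (x : List α) (l : List (List α)) : Prop :=
  (∀ w ∈ l, w ∈ L) ∧ l.flatten = x

/-- The set of words of `L∗` all of whose factorizations into elements of `L` have the
same number of factors. -/
def SU {α : Type*} (L : Language α) : Language α :=
  {x | x ∈ L∗ ∧ ∀ l₁ l₂, IsFactorization L x l₁ → IsFactorization L x l₂ →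
    l₁.length = l₂.length}

namespace Stmt7Aux

def LL : Language (Fin 2) := {[0], [0, 1], [0, 0, 1]}

def pat (i j : ℕ) : List (Fin 2) :=
  (List.replicate i [0, 1]).flatten ++ List.replicate j 0

lemma pat_zero (j : ℕ) : pat 0 j = List.replicate j 0 := by simp [pat]

lemma pat_succ (i j : ℕ) : pat (i + 1) j = 0 :: 1 :: pat i j := by
  simp [pat, List.replicate_succ]

lemma pat_length (i j : ℕ) : (pat i j).length = 2 * i + j := by
  induction i with
  | zero => simp [pat_zero]
  | succ n ih => rw [pat_succ]; simp only [List.length_cons, ih]; omega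

lemma mem_LL (w : List (Fin 2)) (h : w ∈ LL) :
    w = [0] ∨ w = [0, 1] ∨ w = [0, 0, 1] := h

lemma flatten_ne_one_cons (l : List (List (Fin 2))) (h : ∀ w ∈ l, w ∈ LL)
    (t : List (Fin 2)) : l.flatten ≠ 1 :: t := by
  cases l with
  | nil => simp
  | cons w l =>
    rcases mem_LL w (h w (by simp)) with rfl | rfl | rfl <;>
      simp [List.flatten_cons]

lemma one_cons_ne_replicate (j : ℕ) (t : List (Fin 2)) :
    (1 : Fin 2) :: t ≠ List.replicate j 0 := by
  cases j with
  | zero => simp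
  | succ n => simp [List.replicate_succ]

lemma fact_pat (i j : ℕ) :
    IsFactorization LL (pat i j) (List.replicate i [0, 1] ++ List.replicate j [0]) := by
  constructor
  · intro w hw
    rcases List.mem_append.1 hw with hw | hw
    · rw [List.eq_of_mem_replicate hw]; right; left; rfl
    · rw [List.eq_of_mem_replicate hw]; left; rfl
  · simp [pat]

lemma lenA (l : List (List (Fin 2))) (h : ∀ w ∈ l, w ∈ LL) :
    ∀ i j, l.flatten = pat i j → l.length = i + j := by
  induction l with
  | nil =>
    intro i j hf
    have := congrArg List.length hf
    rw [pat_length] at this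
    simp at this
    simp; omega
  | cons w l ih =>
    intro i j hf
    have hl : ∀ w ∈ l, w ∈ LL := fun w hw => h w (List.mem_cons_of_mem _ hw)
    rcases mem_LL w (h w (by simp)) with rfl | rfl | rfl
    · cases i with
      | zero =>
        rw [pat_zero] at hf
        cases j with
        | zero => simp at hf
        | succ j' =>
          rw [List.replicate_succ] at hf
          simp only [List.flatten_cons, List.cons_append, List.nil_append,
            List.cons.injEq] at hf
          have := ih hl 0 j' (by rw [hf.2, pat_zero])
          simp only [List.length_cons, this]; omega
      | succ i' =>
        rw [pat_succ] at hf
        simp only [List.flatten_cons, List.cons_append, List.nil_append,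
          List.cons.injEq] at hf
        exact absurd hf.2 (flatten_ne_one_cons l hl _)
    · cases i with
      | zero =>
        rw [pat_zero] at hf
        cases j with
        | zero => simp at hf
        | succ j' =>
          rw [List.replicate_succ] at hf
          simp only [List.flatten_cons, List.cons_append, List.nil_append,
            List.cons.injEq] at hf
          exact absurd hf.2 (one_cons_ne_replicate _ _)
      | succ i' =>
        rw [pat_succ] at hf
        simp only [List.flatten_cons, List.cons_append, List.nil_append,
          List.cons.injEq] at hf
        have := ih hl i' j hf.2.2
        simp only [List.length_cons, this]; omega
    · cases i with
      | zero =>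
        rw [pat_zero] at hf
        cases j with
        | zero => simp at hf
        | succ j' =>
          rw [List.replicate_succ] at hf
          simp only [List.flatten_cons, List.cons_append, List.nil_append,
            List.cons.injEq] at hf
          have hf2 := hf.2
          cases j' with
          | zero => simp at hf2
          | succ j'' =>
            rw [List.replicate_succ] at hf2
            simp only [List.cons.injEq] at hf2
            exact absurd hf2.2 (one_cons_ne_replicate _ _)
      | succ i' =>
        rw [pat_succ] at hf
        simp only [List.flatten_cons, List.cons_append, List.nil_append,
          List.cons.injEq] at hf
        exact absurd hf.2.1 (by decide)

lemma lemB (l : List (List (Fin 2))) :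
    ∀ x, (∀ w ∈ l, w ∈ LL) → l.flatten = x →
    (∀ l₁ l₂, IsFactorization LL x l₁ → IsFactorization LL x l₂ →
      l₁.length = l₂.length) →
    ∃ i j, x = pat i j := by
  induction l with
  | nil =>
    intro x _ hf _
    exact ⟨0, 0, by rw [← hf]; simp [pat_zero]⟩
  | cons w l ih =>
    intro x h hf hsu
    have hl : ∀ w ∈ l, w ∈ LL := fun w hw => h w (List.mem_cons_of_mem _ hw)
    have hw : w ∈ LL := h w (by simp)
    have hsu' : ∀ l₁ l₂, IsFactorization LL l.flatten l₁ →
        IsFactorization LL l.flatten l₂ → l₁.length = l₂.length := by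
      intro l₁ l₂ h₁ h₂
      have := hsu (w :: l₁) (w :: l₂)
        ⟨by intro u hu; rcases List.mem_cons.1 hu with rfl | hu; exact hw; exact h₁.1 u hu,
         by rw [← hf]; simp [h₁.2]⟩
        ⟨by intro u hu; rcases List.mem_cons.1 hu with rfl | hu; exact hw; exact h₂.1 u hu,
         by rw [← hf]; simp [h₂.2]⟩
      simpa using this
    obtain ⟨i, j, hrest⟩ := ih l.flatten hl rfl hsu'
    have hx : x = w ++ pat i j := by rw [← hf, ← hrest]; simp
    rcases mem_LL w hw with rfl | rfl | rfl
    · cases i with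
      | zero =>
        refine ⟨0, j + 1, ?_⟩
        rw [hx, pat_zero, pat_zero, List.replicate_succ]
        rfl
      | succ i' =>
        exfalso
        have h1 : IsFactorization LL x
            ([0] :: (List.replicate (i' + 1) [0, 1] ++ List.replicate j [0])) := by
          constructor
          · intro u hu
            rcases List.mem_cons.1 hu with rfl | hu
            · left; rfl
            · exact (fact_pat (i' + 1) j).1 u hu
          · rw [hx]; simp only [List.flatten_cons, (fact_pat (i' + 1) j).2]
            try rfl
        have h2 : IsFactorization LL x
            ([0, 0, 1] :: (List.replicate i' [0, 1] ++ List.replicate j [0])) := by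
          constructor
          · intro u hu
            rcases List.mem_cons.1 hu with rfl | hu
            · right; right; rfl
            · exact (fact_pat i' j).1 u hu
          · rw [hx, pat_succ]
            simp only [List.flatten_cons, (fact_pat i' j).2]
            try rfl
        have := hsu _ _ h1 h2
        simp at this
    · exact ⟨i + 1, j, by rw [hx, pat_succ]; rfl⟩
    · exfalso
      have h1 : IsFactorization LL x
          ([0, 0, 1] :: (List.replicate i [0, 1] ++ List.replicate j [0])) := by
        constructor
        · intro u hu
          rcases List.mem_cons.1 hu with rfl | hu
          · right; right; rfl
          · exact (fact_pat i j).1 u hu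
        · rw [hx]; simp only [List.flatten_cons, (fact_pat i j).2]
      have h2 : IsFactorization LL x
          ([0] :: [0, 1] :: (List.replicate i [0, 1] ++ List.replicate j [0])) := by
        constructor
        · intro u hu
          rcases List.mem_cons.1 hu with rfl | hu
          · left; rfl
          rcases List.mem_cons.1 hu with rfl | hu
          · right; left; rfl
          · exact (fact_pat i j).1 u hu
        · rw [hx]; simp only [List.flatten_cons, (fact_pat i j).2]
          try rfl
      have := hsu _ _ h1 h2
      simp at this

end Stmt7Aux

open Stmt7Aux in
/-- For `L = {a, ab, aab}` over `Fin 2` (with `a = 0`, `b = 1`), `SU L = (ab)* a*`. -/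
theorem stmt7 :
    SU (show Set (List (Fin 2)) from {[0], [0, 1], [0, 0, 1]}) =
      {x : List (Fin 2) | ∃ i j, x = (List.replicate i [0, 1]).flatten ++
        List.replicate j 0} := by
  ext x
  constructor
  · rintro ⟨hstar, huniq⟩
    replace hstar := Language.mem_kstar.1 hstar
    obtain ⟨S, rfl, hS⟩ := hstar
    obtain ⟨i, j, hij⟩ := lemB S S.flatten hS rfl huniq
    exact ⟨i, j, hij⟩
  · rintro ⟨i, j, rfl⟩
    constructor
    · refine Language.mem_kstar.2 ?_
      exact ⟨_, (fact_pat i j).2.symm, (fact_pat i j).1⟩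
    · intro l₁ l₂ h₁ h₂
      rw [lenA l₁ h₁.1 i j h₁.2, lenA l₂ h₂.1 i j h₂.2]
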